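/- If L is a slowly varying function on (0,∞) (i.e., L(αx)/L(x) → 1 as x → ∞ for every fixed α > 0) and α < -1, then the ratio (∫_x^∞ t^α L(t) dt) / (x^{α+1} L(x)) tends to -1/(α+1) as x → ∞. -/

import Mathlib

open MeasureTheory Filter Set Topology
open Pointwise
open scoped ENNReal

/-- Uniform convergence theorem for "additively slowly varying" measurable functions. -/
lemma uct (h : ℝ → ℝ) (hm : Measurable h)
    (hc : ∀ t : ℝ, Tendsto (fun u => h (u + t) - h u) atTop (𝓝 0)) :
    ∀ ε > 0, ∃ X : ℝ, ∀ u ≥ X, ∀ t ∈ Icc (0:ℝ) 1, |h (u + t) - h u| ≤ ε := by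
  intro ε hε
  by_contra hcon
  push_neg at hcon
  choose u hu t ht hbad using hcon
  -- sequences indexed by ℕ
  set un : ℕ → ℝ := fun n => u n with hun
  set tn : ℕ → ℝ := fun n => t n with htn
  have hun_top : Tendsto un atTop atTop :=
    tendsto_atTop_mono (fun n => hu n) tendsto_natCast_atTop_atTop
  have htn_mem : ∀ n, tn n ∈ Icc (0:ℝ) 1 := fun n => ht n
  have hvn_top : Tendsto (fun n => un n + tn n) atTop atTop :=
    tendsto_atTop_add_right_of_le _ 0 hun_top (fun n => (htn_mem n).1)
  -- convergence in measure of shifts, for any sequence tending to infinity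
  have key : ∀ v : ℕ → ℝ, Tendsto v atTop atTop →
      Tendsto (fun n => volume ({s : ℝ | ε / 2 ≤ |h (v n + s) - h (v n)|} ∩ Icc (0:ℝ) 2))
        atTop (𝓝 0) := by
    intro v hv
    set μ2 : Measure ℝ := volume.restrict (Icc (0:ℝ) 2) with hμ2
    have : IsFiniteMeasure μ2 := by
      constructor
      rw [hμ2, Measure.restrict_apply_univ, Real.volume_Icc]
      exact ENNReal.ofReal_lt_top
    have hmeas : ∀ n, AEStronglyMeasurable (fun s => h (v n + s) - h (v n)) μ2 := by
      intro n
      exact ((hm.comp (measurable_id.const_add (v n))).sub measurable_const).aestronglyMeasurable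
    have hptw : ∀ᵐ s ∂μ2, Tendsto (fun n => h (v n + s) - h (v n)) atTop (𝓝 ((fun _ => (0:ℝ)) s)) := by
      refine Eventually.of_forall (fun s => ?_)
      exact (hc s).comp hv
    have := tendstoInMeasure_of_tendsto_ae hmeas hptw (ENNReal.ofReal (ε / 2)) (by simp only [ENNReal.ofReal_pos]; linarith)
    have hset : ∀ n, {s : ℝ | ENNReal.ofReal (ε / 2) ≤ edist (h (v n + s) - h (v n)) ((fun _ => (0:ℝ)) s)}
        = {s : ℝ | ε / 2 ≤ |h (v n + s) - h (v n)|} := by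
      intro n; ext s
      simp only [Set.mem_setOf_eq, edist_dist, Real.dist_eq, sub_zero]
      exact ENNReal.ofReal_le_ofReal_iff (abs_nonneg _)
    simp only [hset] at this
    have hres : ∀ n, μ2 {s : ℝ | ε / 2 ≤ |h (v n + s) - h (v n)|}
        = volume ({s : ℝ | ε / 2 ≤ |h (v n + s) - h (v n)|} ∩ Icc (0:ℝ) 2) := by
      intro n
      rw [hμ2, Measure.restrict_apply]
      exact measurableSet_le measurable_const
        (((hm.comp (measurable_id.const_add (v n))).sub measurable_const).abs)
    simp only [hres] at this
    exact this
  -- pick N where both bad sets are small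
  have h4 : (0:ℝ≥0∞) < 1/4 := by norm_num
  have e1 := (key un hun_top).eventually_lt_const h4
  have e2 := (key (fun n => un n + tn n) hvn_top).eventually_lt_const h4
  obtain ⟨N, hN⟩ := (e1.and e2).exists
  obtain ⟨hN1, hN2⟩ := hN
  set SA : Set ℝ := {s : ℝ | ε / 2 ≤ |h (un N + s) - h (un N)|} with hSA
  set SB : Set ℝ := {s : ℝ | ε / 2 ≤ |h (un N + tn N + s) - h (un N + tn N)|} with hSB
  set A : Set ℝ := Icc (0:ℝ) 2 \ SA with hA
  set B : Set ℝ := Icc (0:ℝ) 2 \ SB with hB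
  have hSA_meas : MeasurableSet SA :=
    measurableSet_le measurable_const
      (((hm.comp (measurable_id.const_add (un N))).sub measurable_const).abs)
  have hSB_meas : MeasurableSet SB :=
    measurableSet_le measurable_const
      (((hm.comp (measurable_id.const_add (un N + tn N))).sub measurable_const).abs)
  have hA_meas : MeasurableSet A := measurableSet_Icc.diff hSA_meas
  have hB_meas : MeasurableSet B := measurableSet_Icc.diff hSB_meas
  -- lower bounds on volumes
  have hvol2 : volume (Icc (0:ℝ) 2) = ENNReal.ofReal 2 := by
    rw [Real.volume_Icc]; norm_num
  have cover : ∀ S : Set ℝ, Icc (0:ℝ) 2 ⊆ (Icc (0:ℝ) 2 \ S) ∪ (S ∩ Icc (0:ℝ) 2) := by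
    intro S s hs
    by_cases hsS : s ∈ S
    · exact Or.inr ⟨hsS, hs⟩
    · exact Or.inl ⟨hs, hsS⟩
  have hvolA : ENNReal.ofReal 2 ≤ volume A + 1/4 := by
    calc ENNReal.ofReal 2 = volume (Icc (0:ℝ) 2) := hvol2.symm
    _ ≤ volume (A ∪ (SA ∩ Icc (0:ℝ) 2)) := measure_mono (cover SA)
    _ ≤ volume A + volume (SA ∩ Icc (0:ℝ) 2) := measure_union_le _ _
    _ ≤ volume A + 1/4 := add_le_add_right hN1.le _
  have hvolB : ENNReal.ofReal 2 ≤ volume B + 1/4 := by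
    calc ENNReal.ofReal 2 = volume (Icc (0:ℝ) 2) := hvol2.symm
    _ ≤ volume (B ∪ (SB ∩ Icc (0:ℝ) 2)) := measure_mono (cover SB)
    _ ≤ volume B + volume (SB ∩ Icc (0:ℝ) 2) := measure_union_le _ _
    _ ≤ volume B + 1/4 := add_le_add_right hN2.le _
  -- A and tn N +ᵥ B are disjoint
  have hdisj : Disjoint A (tn N +ᵥ B) := by
    rw [Set.disjoint_iff_inter_eq_empty]
    ext s
    simp only [Set.mem_inter_iff, Set.mem_empty_iff_false, iff_false]
    rintro ⟨hsA, hsB⟩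
    rw [Set.mem_vadd_set_iff_neg_vadd_mem] at hsB
    have hb : -tn N + s ∈ B := hsB
    have h1 : |h (un N + s) - h (un N)| < ε / 2 := by
      have := hsA.2
      simp only [hSA, Set.mem_setOf_eq, not_le] at this
      exact this
    have h2 : |h (un N + tn N + (-tn N + s)) - h (un N + tn N)| < ε / 2 := by
      have := hb.2
      simp only [hSB, Set.mem_setOf_eq, not_le] at this
      exact this
    rw [show un N + tn N + (-tn N + s) = un N + s by ring] at h2
    have hN3 : ε < |h (un N + tn N) - h (un N)| := hbad N
    have : |h (un N + tn N) - h (un N)| ≤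
        |h (un N + tn N) - h (un N + s)| + |h (un N + s) - h (un N)| := abs_sub_le _ _ _
    rw [abs_sub_comm (h (un N + tn N)) (h (un N + s))] at this
    linarith
  have hBvadd_meas : MeasurableSet (tn N +ᵥ B) := hB_meas.const_vadd _
  have hsum : volume A + volume B = volume (A ∪ (tn N +ᵥ B)) := by
    rw [measure_union hdisj hBvadd_meas, measure_vadd]
  have hsub : A ∪ (tn N +ᵥ B) ⊆ Icc (0:ℝ) 3 := by
    rintro s (hs | hs)
    · exact ⟨hs.1.1, by linarith [hs.1.2]⟩
    · obtain ⟨b, hbB, rfl⟩ := hs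
      have h1 := hbB.1.1
      have h2 := hbB.1.2
      have h3 := (htn_mem N).1
      have h4 := (htn_mem N).2
      constructor
      · simp only [vadd_eq_add]; linarith
      · simp only [vadd_eq_add]; linarith
  have hle3 : volume A + volume B ≤ ENNReal.ofReal 3 := by
    rw [hsum]
    calc volume (A ∪ (tn N +ᵥ B)) ≤ volume (Icc (0:ℝ) 3) := measure_mono hsub
    _ = ENNReal.ofReal 3 := by rw [Real.volume_Icc]; norm_num
  -- contradiction
  have : ENNReal.ofReal 2 + ENNReal.ofReal 2 ≤ ENNReal.ofReal 3 + (1/4 + 1/4) := by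
    calc ENNReal.ofReal 2 + ENNReal.ofReal 2 ≤ (volume A + 1/4) + (volume B + 1/4) :=
      add_le_add hvolA hvolB
    _ = (volume A + volume B) + (1/4 + 1/4) := by ring
    _ ≤ ENNReal.ofReal 3 + (1/4 + 1/4) := add_le_add_left hle3 _
  rw [show (ENNReal.ofReal 2) = (2:ℝ≥0∞) by norm_num,
      show (ENNReal.ofReal 3) = (3:ℝ≥0∞) by norm_num] at this
  have h43 : ((3:ℝ≥0∞) + (1/4 + 1/4)) ≠ ⊤ := by
    refine ENNReal.add_ne_top.mpr ⟨by norm_num, ?_⟩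
    refine ENNReal.add_ne_top.mpr ⟨by norm_num, by norm_num⟩
  have := ENNReal.toReal_mono h43 this
  rw [ENNReal.toReal_add (by norm_num) (by norm_num),
    ENNReal.toReal_add (by norm_num) (by norm_num)] at this
  rw [ENNReal.toReal_add (by norm_num) (by norm_num)] at this
  simp only [ENNReal.toReal_ofNat, ENNReal.toReal_inv] at this
  norm_num at this

/-- Iterating the uniform bound on `[0,1]` gives a linear bound for all `t ≥ 0`. -/
lemma uct_iterate (h : ℝ → ℝ) {X ε : ℝ} (hε : 0 ≤ ε)
    (H : ∀ u ≥ X, ∀ t ∈ Icc (0:ℝ) 1, |h (u + t) - h u| ≤ ε) :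
    ∀ u ≥ X, ∀ t, 0 ≤ t → |h (u + t) - h u| ≤ ε * (t + 1) := by
  have key : ∀ n : ℕ, ∀ u, X ≤ u → ∀ t : ℝ, 0 ≤ t → t ≤ (n : ℝ) → |h (u + t) - h u| ≤ ε * (t + 1) := by
    intro n
    induction n with
    | zero =>
      intro u hu t ht0 ht1
      have : t = 0 := le_antisymm (by simpa using ht1) ht0
      subst this
      simp only [add_zero, sub_self, abs_zero]
      positivity
    | succ n ih =>
      intro u hu t ht0 htn
      by_cases ht1 : t ≤ 1
      · have := H u hu t ⟨ht0, ht1⟩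
        nlinarith
      · push_neg at ht1
        have h1 : |h (u + 1) - h u| ≤ ε := H u hu 1 ⟨zero_le_one, le_refl 1⟩
        have h2 : |h ((u + 1) + (t - 1)) - h (u + 1)| ≤ ε * ((t - 1) + 1) := by
          refine ih (u + 1) (by linarith) (t - 1) (by linarith) ?_
          push_cast at htn ⊢
          linarith
        rw [show (u + 1) + (t - 1) = u + t by ring] at h2
        calc |h (u + t) - h u| ≤ |h (u + t) - h (u + 1)| + |h (u + 1) - h u| := abs_sub_le _ _ _
        _ ≤ ε * ((t - 1) + 1) + ε := add_le_add h2 h1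
        _ = ε * (t + 1) := by ring
  intro u hu t ht
  exact key ⌈t⌉₊ u hu t ht (Nat.le_ceil t)

/-- Karamata: if `L` is slowly varying on `(0,∞)` and `α < -1`, then
`(∫_x^∞ t^α L(t) dt) / (x^(α+1) L(x)) → -1/(α+1)` as `x → ∞`. -/
theorem slowly_varying_tail_integral (L : ℝ → ℝ) (α : ℝ)
    (hLmeas : Measurable L)
    (hLpos : ∀ x > 0, 0 < L x)
    (hslow : ∀ c > 0, Tendsto (fun x => L (c * x) / L x) atTop (𝓝 1))
    (hα : α < -1)
    (hint : ∀ x > 0, IntegrableOn (fun t => t ^ α * L t) (Ioi x)) :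
    Tendsto (fun x => (∫ t in Ioi x, t ^ α * L t) / (x ^ (α + 1) * L x))
      atTop (𝓝 (-1 / (α + 1))) := by
  set h : ℝ → ℝ := fun u => Real.log (L (Real.exp u)) with hh
  have hm : Measurable h := Real.measurable_log.comp (hLmeas.comp Real.measurable_exp)
  have hc : ∀ t : ℝ, Tendsto (fun u => h (u + t) - h u) atTop (𝓝 0) := by
    intro t
    have hcpos : (0:ℝ) < Real.exp t := Real.exp_pos t
    have h1 : Tendsto (fun u => L (Real.exp t * Real.exp u) / L (Real.exp u)) atTop (𝓝 1) :=
      (hslow _ hcpos).comp Real.tendsto_exp_atTop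
    have h2 : Tendsto (fun u => Real.log (L (Real.exp t * Real.exp u) / L (Real.exp u)))
        atTop (𝓝 0) := by
      have := (Real.continuousAt_log one_ne_zero).tendsto.comp h1
      simpa [Real.log_one, Function.comp_def] using this
    refine h2.congr (fun u => ?_)
    have he1 : (0:ℝ) < L (Real.exp t * Real.exp u) := hLpos _ (by positivity)
    have he2 : (0:ℝ) < L (Real.exp u) := hLpos _ (Real.exp_pos u)
    rw [Real.log_div he1.ne' he2.ne']
    show Real.log (L (Real.exp t * Real.exp u)) - Real.log (L (Real.exp u))
      = Real.log (L (Real.exp (u + t))) - Real.log (L (Real.exp u))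
    rw [Real.exp_add, mul_comm]
  set ε₀ : ℝ := (-1 - α) / 2 with hε₀def
  have hε₀pos : 0 < ε₀ := by rw [hε₀def]; linarith
  have hαε : α + ε₀ < -1 := by rw [hε₀def]; linarith
  obtain ⟨X, hX⟩ := uct h hm hc ε₀ hε₀pos
  have hP : ∀ u ≥ X, ∀ t, 0 ≤ t → |h (u + t) - h u| ≤ ε₀ * (t + 1) :=
    uct_iterate h hε₀pos.le hX
  have potter : ∀ x : ℝ, Real.exp X ≤ x → ∀ s : ℝ, 1 ≤ s →
      L (x * s) / L x ≤ Real.exp ε₀ * s ^ ε₀ := by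
    intro x hx s hs
    have hx0 : (0:ℝ) < x := lt_of_lt_of_le (Real.exp_pos X) hx
    have hs0 : (0:ℝ) < s := lt_of_lt_of_le one_pos hs
    have hlogx : X ≤ Real.log x := (Real.le_log_iff_exp_le hx0).mpr hx
    have hlogs : 0 ≤ Real.log s := Real.log_nonneg hs
    have hb := hP (Real.log x) hlogx (Real.log s) hlogs
    have hkey : h (Real.log x + Real.log s) - h (Real.log x)
        = Real.log (L (x * s)) - Real.log (L x) := by
      simp only [hh]
      rw [Real.exp_add, Real.exp_log hx0, Real.exp_log hs0]
    rw [hkey] at hb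
    have hb2 : Real.log (L (x * s)) - Real.log (L x) ≤ ε₀ * (Real.log s + 1) := (abs_le.mp hb).2
    have hLx : 0 < L x := hLpos x hx0
    have hLxs : 0 < L (x * s) := hLpos _ (by positivity)
    have hexp := Real.exp_le_exp.mpr hb2
    rw [Real.exp_sub, Real.exp_log hLxs, Real.exp_log hLx] at hexp
    calc L (x * s) / L x ≤ Real.exp (ε₀ * (Real.log s + 1)) := hexp
    _ = Real.exp ε₀ * s ^ ε₀ := by
        rw [mul_add, mul_one, Real.exp_add, Real.rpow_def_of_pos hs0,
          mul_comm (Real.log s) ε₀]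
        ring
  set F : ℝ → ℝ := fun x => ∫ s in Ioi (1:ℝ), s ^ α * (L (x * s) / L x) with hF
  have hFtend : Tendsto F atTop (𝓝 (-1 / (α + 1))) := by
    have hlim : Tendsto (fun x : ℝ => ∫ s in Ioi (1:ℝ), s ^ α * (L (x * s) / L x))
        atTop (𝓝 (∫ s in Ioi (1:ℝ), s ^ α)) := by
      apply tendsto_integral_filter_of_dominated_convergence
        (bound := fun s => Real.exp ε₀ * s ^ (α + ε₀))
      · refine Eventually.of_forall (fun x => ?_)
        have hsa : AEStronglyMeasurable (fun s : ℝ => s ^ α) (volume.restrict (Ioi 1)) := by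
          refine ContinuousOn.aestronglyMeasurable ?_ measurableSet_Ioi
          exact ContinuousOn.rpow_const continuousOn_id
            (fun y hy => Or.inl (ne_of_gt (lt_trans one_pos hy)))
        exact hsa.mul (((hLmeas.comp (measurable_id.const_mul x)).div_const
          (L x)).aestronglyMeasurable)
      · rw [eventually_atTop]
        refine ⟨max (Real.exp X) 1, fun x hx => ?_⟩
        rw [ae_restrict_iff' measurableSet_Ioi]
        refine Eventually.of_forall (fun s hs => ?_)
        have hs1 : (1:ℝ) < s := hs
        have hx0 : (0:ℝ) < x := lt_of_lt_of_le one_pos (le_trans (le_max_right _ _) hx)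
        have hLx : 0 < L x := hLpos x hx0
        have hLxs : 0 < L (x * s) := hLpos _ (by positivity)
        have hsa : 0 < s ^ α := Real.rpow_pos_of_pos (by linarith) α
        rw [Real.norm_eq_abs, abs_of_nonneg (by positivity)]
        have hp := potter x (le_trans (le_max_left _ _) hx) s hs1.le
        calc s ^ α * (L (x * s) / L x) ≤ s ^ α * (Real.exp ε₀ * s ^ ε₀) :=
              mul_le_mul_of_nonneg_left hp hsa.le
        _ = Real.exp ε₀ * s ^ (α + ε₀) := by
              rw [Real.rpow_add (by linarith : (0:ℝ) < s)]
              ring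
      · exact (integrableOn_Ioi_rpow_of_lt hαε one_pos).const_mul _
      · rw [ae_restrict_iff' measurableSet_Ioi]
        refine Eventually.of_forall (fun s hs => ?_)
        have hs0 : (0:ℝ) < s := lt_trans one_pos hs
        have h1 : Tendsto (fun x => L (x * s) / L x) atTop (𝓝 1) := by
          refine (hslow s hs0).congr (fun x => ?_)
          rw [mul_comm]
        have h2 := h1.const_mul (s ^ α)
        simpa using h2
    rw [integral_Ioi_rpow_of_lt hα one_pos, Real.one_rpow] at hlim
    exact hlim
  have heq : ∀ᶠ x in atTop,
      (∫ t in Ioi x, t ^ α * L t) / (x ^ (α + 1) * L x) = F x := by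
    filter_upwards [eventually_gt_atTop (0:ℝ)] with x hx0
    have hLx : 0 < L x := hLpos x hx0
    have hxpow : (0:ℝ) < x ^ (α + 1) := Real.rpow_pos_of_pos hx0 _
    have hcv := MeasureTheory.integral_comp_mul_left_Ioi (fun t => t ^ α * L t) 1 hx0
    rw [mul_one, smul_eq_mul] at hcv
    have hJ : ∫ t in Ioi x, t ^ α * L t
        = x * ∫ s in Ioi (1:ℝ), (x * s) ^ α * L (x * s) := by
      rw [hcv]
      field_simp
    have hsplit : ∫ s in Ioi (1:ℝ), (x * s) ^ α * L (x * s)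
        = x ^ α * ∫ s in Ioi (1:ℝ), s ^ α * L (x * s) := by
      rw [← MeasureTheory.integral_const_mul]
      refine setIntegral_congr_fun measurableSet_Ioi (fun s hs => ?_)
      have hs0 : (0:ℝ) < s := lt_trans one_pos hs
      rw [Real.mul_rpow hx0.le hs0.le]
      ring
    have hFx : F x = (∫ s in Ioi (1:ℝ), s ^ α * L (x * s)) / L x := by
      rw [hF, ← MeasureTheory.integral_div]
      simp only [mul_div_assoc]
    rw [hJ, hsplit, hFx]
    rw [show x * (x ^ α * ∫ s in Ioi (1:ℝ), s ^ α * L (x * s))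
        = x ^ (α + 1) * ∫ s in Ioi (1:ℝ), s ^ α * L (x * s) by
      rw [Real.rpow_add_one hx0.ne']; ring]
    rw [mul_div_mul_left _ _ hxpow.ne']
  exact hFtend.congr' (heq.mono fun x hx => hx.symm)
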